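/- Let M be an n×n real skew-symmetric matrix, P Haar-distributed on O(n) with n ≥ 2, and 2 ≤ r ≤ n. Let P(r) denote the first r rows of P. Then E[‖P(r) M P(r)^T‖_F²] = (r(r−1))/(n(n−1)) · ‖M‖_F². -/

import Mathlib

open Matrix MeasureTheory

/-- The product σ-algebra on matrices (entrywise). -/
instance matrixMeasurableSpace (n m : ℕ) : MeasurableSpace (Matrix (Fin n) (Fin m) ℝ) := by
  unfold Matrix; infer_instance

/-- Squared Frobenius norm. -/
def frobSq {m n : ℕ} (A : Matrix (Fin m) (Fin n) ℝ) : ℝ := ∑ i, ∑ j, (A i j) ^ 2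

lemma frobSq_conj {n : ℕ} (P M : Matrix (Fin n) (Fin n) ℝ) (h : Pᵀ * P = 1) :
    frobSq (P * M * Pᵀ) = frobSq M := by
  have hfr : ∀ B : Matrix (Fin n) (Fin n) ℝ, frobSq B = (B * Bᵀ).trace := by
    intro B
    simp [frobSq, Matrix.trace, Matrix.mul_apply, Matrix.diag, sq]
  have hPPT : P * Pᵀ = 1 := mul_eq_one_comm.mp h
  rw [hfr, hfr]
  have : P * M * Pᵀ * (P * M * Pᵀ)ᵀ = P * (M * Mᵀ) * Pᵀ := by
    simp only [Matrix.transpose_mul, Matrix.transpose_transpose]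
    calc P * M * Pᵀ * (Pᵀᵀ * (Mᵀ * Pᵀ)) = P * M * (Pᵀ * P) * (Mᵀ * Pᵀ) := by
          simp only [Matrix.transpose_transpose, Matrix.mul_assoc]
      _ = P * (M * Mᵀ) * Pᵀ := by rw [h]; simp only [Matrix.mul_one, Matrix.mul_assoc]
  rw [this, Matrix.trace_mul_comm, ← Matrix.mul_assoc, ← Matrix.mul_assoc, h]
  simp

lemma perm_orth {n : ℕ} (σ : Equiv.Perm (Fin n)) :
    (σ.toPEquiv.toMatrix : Matrix (Fin n) (Fin n) ℝ)ᵀ * σ.toPEquiv.toMatrix = 1 := by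
  rw [← PEquiv.toMatrix_symm, ← PEquiv.toMatrix_trans]
  simp [← Equiv.toPEquiv_symm, ← Equiv.toPEquiv_trans]

lemma perm_conj {n : ℕ} (σ : Equiv.Perm (Fin n)) (A : Matrix (Fin n) (Fin n) ℝ) :
    (σ.toPEquiv.toMatrix * A * σ.toPEquiv.toMatrixᵀ : Matrix (Fin n) (Fin n) ℝ)
      = A.submatrix σ σ := by
  rw [PEquiv.toMatrix_toPEquiv_mul, ← PEquiv.toMatrix_symm, ← Equiv.toPEquiv_symm,
    PEquiv.mul_toMatrix_toPEquiv]
  simp [Matrix.submatrix_submatrix]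

theorem stmt_11 (n r : ℕ) (hn : 2 ≤ n) (hr2 : 2 ≤ r) (hr : r ≤ n)
    (M : Matrix (Fin n) (Fin n) ℝ) (hM : Mᵀ = -M)
    {Ω : Type*} [MeasurableSpace Ω] (μ : Measure Ω) [IsProbabilityMeasure μ]
    (P : Ω → Matrix (Fin n) (Fin n) ℝ) (hPmeas : Measurable P)
    (horth : ∀ ω, (P ω)ᵀ * P ω = 1)
    -- Haar distribution: the law of `P` is invariant under left and right translation
    -- by any fixed orthogonal matrix
    (hinvL : ∀ Q : Matrix (Fin n) (Fin n) ℝ, Qᵀ * Q = 1 →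
      Measure.map (fun ω => Q * P ω) μ = Measure.map P μ)
    (hinvR : ∀ Q : Matrix (Fin n) (Fin n) ℝ, Qᵀ * Q = 1 →
      Measure.map (fun ω => P ω * Q) μ = Measure.map P μ) :
    ∫ ω, frobSq ((P ω).submatrix (Fin.castLE hr) id * M *
        ((P ω).submatrix (Fin.castLE hr) id)ᵀ) ∂μ =
      ((r : ℝ) * (r - 1)) / ((n : ℝ) * (n - 1)) * frobSq M := by
  set A : Ω → Matrix (Fin n) (Fin n) ℝ := fun ω => P ω * M * (P ω)ᵀ with hA
  -- skew-symmetry of A, hence zero diagonal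
  have hAskew : ∀ ω, (A ω)ᵀ = -(A ω) := by
    intro ω
    simp only [hA, Matrix.transpose_mul, Matrix.transpose_transpose, hM]
    simp [Matrix.mul_assoc, Matrix.neg_mul, Matrix.mul_neg]
  have hdiag : ∀ ω i, A ω i i = 0 := by
    intro ω i
    have h := congrFun (congrFun (hAskew ω) i) i
    simp only [Matrix.transpose_apply, Matrix.neg_apply] at h
    linarith
  -- Frobenius invariance
  have hfrobA : ∀ ω, frobSq (A ω) = frobSq M := fun ω => frobSq_conj _ _ (horth ω)
  -- entrywise measurability
  have hent : ∀ i a : Fin n, Measurable fun ω => P ω i a := fun i a =>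
    (measurable_pi_apply a).comp ((measurable_pi_apply i).comp hPmeas)
  have hAentry : ∀ ω (i j : Fin n), A ω i j = ∑ b, (∑ a, P ω i a * M a b) * P ω j b := by
    intro ω i j
    simp [hA, Matrix.mul_apply, Matrix.transpose_apply]
  have hAm : ∀ i j : Fin n, Measurable fun ω => A ω i j := by
    intro i j
    simp only [hAentry]
    exact Finset.measurable_sum _ fun b _ =>
      ((Finset.measurable_sum _ fun a _ => (hent i a).mul_const _).mul (hent j b))
  -- boundedness / integrability
  have hbound : ∀ ω (i j : Fin n), (A ω i j) ^ 2 ≤ frobSq M := by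
    intro ω i j
    rw [← hfrobA ω]
    unfold frobSq
    calc (A ω i j) ^ 2 ≤ ∑ b, (A ω i b) ^ 2 :=
          Finset.single_le_sum (f := fun b => (A ω i b) ^ 2)
            (fun b _ => sq_nonneg _) (Finset.mem_univ j)
      _ ≤ ∑ a, ∑ b, (A ω a b) ^ 2 :=
          Finset.single_le_sum (f := fun a => ∑ b, (A ω a b) ^ 2)
            (fun a _ => Finset.sum_nonneg fun b _ => sq_nonneg _) (Finset.mem_univ i)
  have hint : ∀ i j : Fin n, Integrable (fun ω => (A ω i j) ^ 2) μ := by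
    intro i j
    refine (integrable_const (frobSq M)).mono' ((hAm i j).pow_const 2).aestronglyMeasurable ?_
    filter_upwards with ω
    rw [Real.norm_eq_abs, abs_of_nonneg (sq_nonneg _)]
    exact hbound ω i j
  -- invariance of second moments of off-diagonal entries
  have hkey : ∀ i j k l : Fin n, i ≠ j → k ≠ l →
      ∫ ω, (A ω i j) ^ 2 ∂μ = ∫ ω, (A ω k l) ^ 2 ∂μ := by
    intro i j k l hij hkl
    -- a permutation sending i ↦ k, j ↦ l
    obtain ⟨σ, hσi, hσj⟩ : ∃ σ : Equiv.Perm (Fin n), σ i = k ∧ σ j = l := by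
      refine ⟨(Equiv.swap i k).trans (Equiv.swap ((Equiv.swap i k) j) l), ?_, ?_⟩
      · have h1 : (Equiv.swap i k) i = k := Equiv.swap_apply_left i k
        have h2 : (Equiv.swap i k) j ≠ k := by
          intro h
          exact hij ((Equiv.swap i k).injective (h.trans h1.symm)).symm
        simp only [Equiv.trans_apply, h1]
        exact Equiv.swap_apply_of_ne_of_ne (Ne.symm h2) hkl
      · simp only [Equiv.trans_apply]
        exact Equiv.swap_apply_left _ _
    set Q : Matrix (Fin n) (Fin n) ℝ := σ.toPEquiv.toMatrix with hQdef
    have hQ : Qᵀ * Q = 1 := perm_orth σ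
    set h : Matrix (Fin n) (Fin n) ℝ → ℝ := fun B => ((B * M * Bᵀ) i j) ^ 2 with hh
    have hhm : Measurable h := by
      have : h = fun B => (∑ b, (∑ a, B i a * M a b) * B j b) ^ 2 := by
        funext B; simp [hh, Matrix.mul_apply, Matrix.transpose_apply]
      rw [this]
      exact (Finset.measurable_sum _ fun b _ =>
        ((Finset.measurable_sum _ fun a _ =>
          (((measurable_pi_apply a).comp (measurable_pi_apply i)).mul_const _)).mul
          ((measurable_pi_apply b).comp (measurable_pi_apply j)))).pow_const 2
    have hQPm : Measurable fun ω => Q * P ω := by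
      apply measurable_pi_lambda; intro a; apply measurable_pi_lambda; intro b
      have : (fun ω => (Q * P ω) a b) = fun ω => ∑ x, Q a x * P ω x b := by
        funext ω; simp [Matrix.mul_apply]
      rw [this]
      exact Finset.measurable_sum _ fun x _ => (hent x b).const_mul _
    have e1 : ∫ ω, h (Q * P ω) ∂μ = ∫ ω, h (P ω) ∂μ := by
      rw [← integral_map hQPm.aemeasurable hhm.aestronglyMeasurable,
        hinvL Q hQ, integral_map hPmeas.aemeasurable hhm.aestronglyMeasurable]
    have e2 : ∀ ω, h (Q * P ω) = (A ω k l) ^ 2 := by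
      intro ω
      have : Q * P ω * M * (Q * P ω)ᵀ = Q * A ω * Qᵀ := by
        simp only [hA, Matrix.transpose_mul, Matrix.mul_assoc]
      simp only [hh]; rw [this]
      simp only [hQdef, perm_conj σ (A ω), Matrix.submatrix_apply, hσi, hσj]
    have e3 : ∀ ω, h (P ω) = (A ω i j) ^ 2 := fun ω => rfl
    calc ∫ ω, (A ω i j) ^ 2 ∂μ = ∫ ω, h (P ω) ∂μ := by simp only [e3]
      _ = ∫ ω, h (Q * P ω) ∂μ := e1.symm
      _ = ∫ ω, (A ω k l) ^ 2 ∂μ := by simp only [e2]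
  -- the common value
  have h01 : (⟨0, by omega⟩ : Fin n) ≠ ⟨1, by omega⟩ := by simp [Fin.ext_iff]
  set c : ℝ := ∫ ω, (A ω ⟨0, by omega⟩ ⟨1, by omega⟩) ^ 2 ∂μ with hc
  have hval : ∀ i j : Fin n, ∫ ω, (A ω i j) ^ 2 ∂μ = if i = j then 0 else c := by
    intro i j
    split
    · next hij => simp [hij, hdiag]
    · next hij => exact hkey i j _ _ hij h01
  -- total over all entries gives frobSq M
  have htot : (n : ℝ) * c - c = 0 ∨ True := Or.inr trivial
  have hsum_n : (n : ℝ) * ((n : ℝ) * c - c) = frobSq M := by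
    have h1 : ∫ ω, frobSq (A ω) ∂μ = frobSq M := by
      simp only [hfrobA]; simp
    have h2 : ∫ ω, frobSq (A ω) ∂μ = ∑ i : Fin n, ∑ j : Fin n, ∫ ω, (A ω i j) ^ 2 ∂μ := by
      unfold frobSq
      rw [integral_finset_sum _ fun i _ => integrable_finset_sum _ fun j _ => hint i j]
      exact Finset.sum_congr rfl fun i _ =>
        integral_finset_sum _ fun j _ => hint i j
    have h3 : ∀ i : Fin n, ∑ j : Fin n, (if i = j then (0:ℝ) else c) = (n : ℝ) * c - c := by
      intro i
      have : ∀ j : Fin n, (if i = j then (0:ℝ) else c) = c - (if i = j then c else 0) := by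
        intro j; split <;> ring
      simp only [this, Finset.sum_sub_distrib, Finset.sum_const, Finset.card_univ,
        Fintype.card_fin, Finset.sum_ite_eq, Finset.mem_univ, if_true, nsmul_eq_mul]
    rw [h2] at h1
    simp only [hval, h3, Finset.sum_const, Finset.card_univ, Fintype.card_fin,
      nsmul_eq_mul] at h1
    exact h1
  -- the target sum
  have hentry : ∀ ω (i j : Fin r),
      ((P ω).submatrix (Fin.castLE hr) id * M * ((P ω).submatrix (Fin.castLE hr) id)ᵀ) i j
        = A ω (Fin.castLE hr i) (Fin.castLE hr j) := by
    intro ω i j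
    simp [hA, Matrix.mul_apply, Matrix.transpose_apply, Matrix.submatrix_apply]
  have hcast : ∀ i j : Fin r, (Fin.castLE hr i = Fin.castLE hr j) = (i = j) :=
    fun i j => propext ⟨fun h => Fin.castLE_injective hr h, fun h => congrArg _ h⟩
  have hLHS : ∫ ω, frobSq ((P ω).submatrix (Fin.castLE hr) id * M *
      ((P ω).submatrix (Fin.castLE hr) id)ᵀ) ∂μ = (r : ℝ) * ((r : ℝ) * c - c) := by
    have h2 : ∀ ω, frobSq ((P ω).submatrix (Fin.castLE hr) id * M *
        ((P ω).submatrix (Fin.castLE hr) id)ᵀ)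
          = ∑ i : Fin r, ∑ j : Fin r, (A ω (Fin.castLE hr i) (Fin.castLE hr j)) ^ 2 := by
      intro ω; unfold frobSq
      exact Finset.sum_congr rfl fun i _ => Finset.sum_congr rfl fun j _ => by rw [hentry]
    simp only [h2]
    rw [integral_finset_sum _ fun i _ => integrable_finset_sum _ fun j _ => hint _ _]
    have h4 : ∀ i : Fin r,
        ∫ ω, ∑ j : Fin r, (A ω (Fin.castLE hr i) (Fin.castLE hr j)) ^ 2 ∂μ
          = ∑ j : Fin r, ∫ ω, (A ω (Fin.castLE hr i) (Fin.castLE hr j)) ^ 2 ∂μ :=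
      fun i => integral_finset_sum _ fun j _ => hint _ _
    simp only [h4, hval, hcast]
    have h3 : ∀ i : Fin r, ∑ j : Fin r, (if i = j then (0:ℝ) else c) = (r : ℝ) * c - c := by
      intro i
      have : ∀ j : Fin r, (if i = j then (0:ℝ) else c) = c - (if i = j then c else 0) := by
        intro j; split <;> ring
      simp only [this, Finset.sum_sub_distrib, Finset.sum_const, Finset.card_univ,
        Fintype.card_fin, Finset.sum_ite_eq, Finset.mem_univ, if_true, nsmul_eq_mul]
    simp only [h3, Finset.sum_const, Finset.card_univ, Fintype.card_fin, nsmul_eq_mul]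
  rw [hLHS, ← hsum_n]
  have hn1 : (n : ℝ) ≠ 0 := by positivity
  have hn2 : (n : ℝ) - 1 ≠ 0 := by
    have : (2 : ℝ) ≤ (n : ℝ) := by exact_mod_cast hn
    linarith
  field_simp
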